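/- arXiv:2207.05307 — 2 statements merged into one kernel-verified Lean document; each statement's English description precedes it below -/
import Mathlib

section
/- For every a ∈ ℂ^m, T(a)^F ⊆ (a^{Re F})^{Re F} ∩ a^{Re F}. -/
open Matrix Complex

/-- The standard Hermitian inner product on `ℂ^m`: `⟪a,b⟫ = ∑ l, a l * conj (b l)`. -/
noncomputable def hermInner {m : ℕ} (a b : Fin m → ℂ) : ℂ :=
  ∑ l, a l * (starRingEnd ℂ) (b l)

/-- The `ℂ^k`-valued Hermitian form `F(z,ζ) = (⟪A₁ z, ζ⟫, …, ⟪A_k z, ζ⟫)`. -/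
noncomputable def Fform {m k : ℕ} (A : Fin k → Matrix (Fin m) (Fin m) ℂ)
    (z ζ : Fin m → ℂ) : Fin k → ℂ :=
  fun j => hermInner ((A j).mulVec z) ζ

/-- The orthogonal complement `S^F` of a set `S ⊆ ℂ^m`. -/
noncomputable def orthF {m k : ℕ} (A : Fin k → Matrix (Fin m) (Fin m) ℂ)
    (S : Set (Fin m → ℂ)) : Set (Fin m → ℂ) :=
  {x | ∀ y ∈ S, Fform A x y = 0}

/-- The subspace `T(a,b) = {y : ∃ x, F(x,b) + F(a,y) = 0}`. -/
noncomputable def Tspace {m k : ℕ} (A : Fin k → Matrix (Fin m) (Fin m) ℂ)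
    (a b : Fin m → ℂ) : Set (Fin m → ℂ) :=
  {y | ∃ x, Fform A x b + Fform A a y = 0}

/-- `F` is nondegenerate: the `A_j` are `ℝ`-linearly independent, and
`F(z,ζ) = 0` for all `z` implies `ζ = 0`. -/
noncomputable def FNondeg {m k : ℕ} (A : Fin k → Matrix (Fin m) (Fin m) ℂ) : Prop :=
  LinearIndependent ℝ A ∧ ∀ ζ : Fin m → ℂ, (∀ z : Fin m → ℂ, Fform A z ζ = 0) → ζ = 0

/-- `F` is T-nondegenerate: for generic `a ∈ ℂ^m`, `T(a)^F = {0}`. -/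
noncomputable def TNondeg {m k : ℕ} (A : Fin k → Matrix (Fin m) (Fin m) ℂ) : Prop :=
  ∃ U : Set (Fin m → ℂ), IsOpen U ∧ Dense U ∧
    ∀ a ∈ U, orthF A (Tspace A a a) = {0}

/-- The orthogonal complement `S^{Re F}` of a set `S ⊆ ℂ^m` with respect to
the componentwise real part of `F`. -/
noncomputable def orthReF {m k : ℕ} (A : Fin k → Matrix (Fin m) (Fin m) ℂ)
    (S : Set (Fin m → ℂ)) : Set (Fin m → ℂ) :=
  {x | ∀ y ∈ S, ∀ j, (Fform A x y j).re = 0}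

lemma Fform_conj {m k : ℕ} (A : Fin k → Matrix (Fin m) (Fin m) ℂ)
    (hHerm : ∀ j, (A j).IsHermitian) (z ζ : Fin m → ℂ) (j : Fin k) :
    Fform A z ζ j = (starRingEnd ℂ) (Fform A ζ z j) := by
  simp only [Fform, hermInner, map_sum, _root_.map_mul, RingHomCompTriple.comp_apply,
    RingHom.id_apply, Matrix.mulVec, dotProduct, Finset.sum_mul, Finset.mul_sum]
  rw [Finset.sum_comm]
  refine Finset.sum_congr rfl fun l _ => Finset.sum_congr rfl fun p _ => ?_
  have h := (hHerm j).apply p l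
  rw [← h]
  simp only [RingHom.map_mul, starRingEnd_apply, star_star]
  ring

theorem stmt10 {m k : ℕ} (hm : 0 < m) (hk : 0 < k)
    (A : Fin k → Matrix (Fin m) (Fin m) ℂ) (hHerm : ∀ j, (A j).IsHermitian) :
    ∀ a : Fin m → ℂ,
      orthF A (Tspace A a a) ⊆ orthReF A (orthReF A {a}) ∩ orthReF A {a} := by
  intro a x hx
  have hsym := Fform_conj A hHerm
  have hxa : Fform A x a = 0 := by
    apply hx
    refine ⟨-a, ?_⟩
    funext j
    simp only [Fform, hermInner, Matrix.mulVec_neg, Pi.add_apply, Pi.neg_apply, Pi.zero_apply,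
      neg_mul, Finset.sum_neg_distrib]
    ring
  constructor
  · intro y hy j
    have hyT : y ∈ Tspace A a a := by
      refine ⟨y, ?_⟩
      funext j'
      have h1 := hy a rfl j'
      have h2 : Fform A a y j' = (starRingEnd ℂ) (Fform A y a j') := hsym a y j'
      simp only [Pi.add_apply, Pi.zero_apply, h2]
      rw [Complex.add_conj, h1]
      simp
    have := hx y hyT
    simp [this]
  · intro y hy j
    rcases hy with rfl
    simp [hxa]
end

section
/- Suppose F is nondegenerate and k ≤ 2. Then there is an open dense subset U ⊆ ℂ^m such that (a^F)^F ∩ a^F = {0} for every a ∈ U. -/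
open Matrix Complex

section basic
variable {m : ℕ}

lemma hermInner_add_left (u v w : Fin m → ℂ) :
    hermInner (u + v) w = hermInner u w + hermInner v w := by
  simp [hermInner, add_mul, Finset.sum_add_distrib]

lemma hermInner_smul_left (c : ℂ) (u w : Fin m → ℂ) :
    hermInner (c • u) w = c * hermInner u w := by
  simp [hermInner, Finset.mul_sum, mul_assoc]

lemma hermInner_smul_right (c : ℂ) (u w : Fin m → ℂ) :
    hermInner u (c • w) = (starRingEnd ℂ) c * hermInner u w := by
  simp [hermInner, Finset.mul_sum]; ring_nf; simp [mul_comm, mul_left_comm]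

lemma hermInner_add_right (u v w : Fin m → ℂ) :
    hermInner u (v + w) = hermInner u v + hermInner u w := by
  simp [hermInner, mul_add, Finset.sum_add_distrib]

lemma hermInner_conj (u w : Fin m → ℂ) :
    (starRingEnd ℂ) (hermInner u w) = hermInner w u := by
  simp [hermInner, map_sum, mul_comm]

lemma hermInner_zero_left (w : Fin m → ℂ) : hermInner 0 w = 0 := by simp [hermInner]

lemma hermInner_zero_right (w : Fin m → ℂ) : hermInner w 0 = 0 := by simp [hermInner]

lemma hermInner_self_eq_zero {v : Fin m → ℂ} (h : hermInner v v = 0) : v = 0 := by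
  have h2 : ∑ l, Complex.normSq (v l) = 0 := by
    have := congrArg Complex.re h
    simpa [hermInner, Complex.mul_conj, ← Complex.ofReal_sum] using this
  have hz : ∀ l ∈ Finset.univ, Complex.normSq (v l) = 0 := by
    intro l _
    exact (Finset.sum_eq_zero_iff_of_nonneg (fun i _ => Complex.normSq_nonneg _)).mp h2 l
      (Finset.mem_univ l)
  funext l
  simpa [Complex.normSq_eq_zero] using hz l (Finset.mem_univ l)

lemma hermSwap {N : Matrix (Fin m) (Fin m) ℂ} (hN : N.IsHermitian) (x y : Fin m → ℂ) :
    hermInner (N *ᵥ x) y = hermInner x (N *ᵥ y) := by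
  have hNe : ∀ p l, (starRingEnd ℂ) (N p l) = N l p := by
    intro p l
    have := congrFun (congrFun hN l) p
    simpa [Matrix.conjTranspose_apply] using this
  simp only [hermInner, Matrix.mulVec, dotProduct, map_sum,
    Finset.sum_mul, Finset.mul_sum]
  rw [Finset.sum_comm]
  apply Finset.sum_congr rfl; intro l _
  apply Finset.sum_congr rfl; intro p _
  rw [_root_.map_mul, hNe]
  ring

/-- polarization: a nonzero quadratic Hermitian-type form has a nonvanishing point -/
lemma exists_q_ne (N : Matrix (Fin m) (Fin m) ℂ) {v : Fin m → ℂ} (hv : N *ᵥ v ≠ 0) :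
    ∃ a, hermInner (N *ᵥ a) a ≠ 0 := by
  by_contra hcon
  push_neg at hcon
  have key : ∀ a b, hermInner (N *ᵥ a) b + hermInner (N *ᵥ b) a = 0 := by
    intro a b
    have h := hcon (a + b)
    rw [Matrix.mulVec_add, hermInner_add_left, hermInner_add_right, hermInner_add_right] at h
    have ha := hcon a; have hb := hcon b
    linear_combination h - ha - hb
  have key2 : ∀ a b, hermInner (N *ᵥ a) b = 0 := by
    intro a b
    have h1 := key a b
    have h2 := key (Complex.I • a) b
    rw [Matrix.mulVec_smul, hermInner_smul_left, hermInner_smul_right, Complex.conj_I] at h2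
    have h3 : Complex.I * (hermInner (N *ᵥ a) b - hermInner (N *ᵥ b) a) = 0 := by
      linear_combination h2
    have h4 := (mul_eq_zero.mp h3).resolve_left Complex.I_ne_zero
    linear_combination (h1 + h4) / 2
  exact hv (hermInner_self_eq_zero (key2 v (N *ᵥ v)))

lemma exists_mulVec_ne (N : Matrix (Fin m) (Fin m) ℂ) (hN : N ≠ 0) :
    ∃ v, N *ᵥ v ≠ 0 := by
  by_contra h
  push_neg at h
  apply hN
  ext i j
  have := congrFun (h (Pi.single j 1)) i
  simpa [Matrix.mulVec_single] using this

/-- a matrix whose columns are pointwise parallel to the input is scalar -/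
lemma scalar_of_minors (hm : 0 < m) (C : Matrix (Fin m) (Fin m) ℂ)
    (h : ∀ (a : Fin m → ℂ) i j, (C *ᵥ a) i * a j = (C *ᵥ a) j * a i) :
    ∃ c : ℂ, C = c • 1 := by
  have hcol : ∀ (p l : Fin m), (C *ᵥ Pi.single p 1) l = C l p := by
    intro p l; simp [Matrix.mulVec_single]
  set z : Fin m := ⟨0, hm⟩
  have hoff : ∀ i j, i ≠ j → C i j = 0 := by
    intro i j hij
    have h2 := h (Pi.single j 1) i j
    rw [hcol, hcol] at h2
    rw [Pi.single_eq_same, Pi.single_eq_of_ne hij] at h2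
    simpa using h2
  refine ⟨C z z, ?_⟩
  ext i j
  rcases eq_or_ne i j with rfl | hij
  · rcases eq_or_ne i z with rfl | hne
    · simp [Matrix.one_apply]
    · have key := h (Pi.single i 1 + Pi.single z 1) i z
      rw [Matrix.mulVec_add] at key
      have e1 : (C *ᵥ Pi.single i 1 + C *ᵥ Pi.single z 1) i = C i i + C i z := by
        simp [hcol]
      have e2 : (C *ᵥ Pi.single i 1 + C *ᵥ Pi.single z 1) z = C z i + C z z := by
        simp [hcol]
      rw [e1, e2] at key
      have e3 : ((Pi.single i 1 + Pi.single z 1 : Fin m → ℂ)) z = 1 := by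
        simp [Pi.single_eq_of_ne (Ne.symm hne), Pi.single_eq_same]
      have e4 : ((Pi.single i 1 + Pi.single z 1 : Fin m → ℂ)) i = 1 := by
        simp [Pi.single_eq_of_ne hne, Pi.single_eq_same]
      rw [e3, e4] at key
      rw [hoff i z hne, hoff z i (Ne.symm hne)] at key
      simp only [Matrix.smul_apply, Matrix.one_apply_eq, smul_eq_mul, mul_one]
      linear_combination key
  · simp [Matrix.smul_apply, Matrix.one_apply_ne hij, hoff i j hij]
end basic

section analytic
variable {m : ℕ}

lemma analytic_coord (l : Fin m) :
    AnalyticOnNhd ℝ (fun a : Fin m → ℂ => a l) Set.univ :=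
  (ContinuousLinearMap.proj l : (Fin m → ℂ) →L[ℝ] ℂ).analyticOnNhd _

lemma analytic_conj_comp {f : (Fin m → ℂ) → ℂ} {s : Set (Fin m → ℂ)}
    (hf : AnalyticOnNhd ℝ f s) :
    AnalyticOnNhd ℝ (fun a => (starRingEnd ℂ) (f a)) s := by
  have h2 := (Complex.conjCLE.toContinuousLinearMap).comp_analyticOnNhd hf
  exact h2

lemma analytic_mulVec_entry (N : Matrix (Fin m) (Fin m) ℂ) (l : Fin m) :
    AnalyticOnNhd ℝ (fun a : Fin m → ℂ => (N *ᵥ a) l) Set.univ := by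
  have : (fun a : Fin m → ℂ => (N *ᵥ a) l) = fun a => ∑ p, N l p * a p := by
    funext a; simp [Matrix.mulVec, dotProduct]
  rw [this]
  exact Finset.analyticOnNhd_fun_sum _ fun p _ => analyticOnNhd_const.mul (analytic_coord p)

lemma analytic_hermInner_lin (N : Matrix (Fin m) (Fin m) ℂ) (n : Fin m → ℂ) :
    AnalyticOnNhd ℝ (fun a : Fin m → ℂ => hermInner (N *ᵥ a) n) Set.univ := by
  unfold hermInner
  exact Finset.analyticOnNhd_fun_sum _ fun l _ =>
    (analytic_mulVec_entry N l).mul analyticOnNhd_const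

lemma analytic_sesq (N N' : Matrix (Fin m) (Fin m) ℂ) :
    AnalyticOnNhd ℝ (fun a : Fin m → ℂ => hermInner (N *ᵥ a) (N' *ᵥ a)) Set.univ := by
  unfold hermInner
  exact Finset.analyticOnNhd_fun_sum _ fun l _ =>
    (analytic_mulVec_entry N l).mul (analytic_conj_comp (analytic_mulVec_entry N' l))

lemma open_dense_ne {f : (Fin m → ℂ) → ℂ} (hf : AnalyticOnNhd ℝ f Set.univ)
    {a₀ : Fin m → ℂ} (h0 : f a₀ ≠ 0) :
    IsOpen {a | f a ≠ 0} ∧ Dense {a | f a ≠ 0} := by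
  have hc : Continuous f := by
    rw [← continuousOn_univ]; exact hf.continuousOn
  constructor
  · have : {a | f a ≠ 0} = (f ⁻¹' {0})ᶜ := by ext a; simp
    rw [this]
    exact (isClosed_singleton.preimage hc).isOpen_compl
  · have hint : interior {a | f a = 0} = ∅ := by
      by_contra hne
      obtain ⟨x, hx⟩ := Set.nonempty_iff_ne_empty.mpr hne
      have hev : f =ᶠ[nhds x] 0 := by
        have hmem : {a | f a = 0} ∈ nhds x := mem_interior_iff_mem_nhds.mp hx
        filter_upwards [hmem] with y hy using hy
      have := hf.eqOn_zero_of_preconnected_of_eventuallyEq_zero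
        (convex_univ.isPreconnected) (Set.mem_univ x) hev
      exact h0 (this (Set.mem_univ a₀))
    have : {a | f a ≠ 0} = {a | f a = 0}ᶜ := by ext a; simp
    rw [this, ← interior_eq_empty_iff_dense_compl]
    exact hint
end analytic

section span
variable {m k : ℕ}

lemma hermInner_eq_inner (u y : EuclideanSpace ℂ (Fin m)) :
    hermInner u y = (inner ℂ y u : ℂ) := by
  simp only [hermInner, PiLp.inner_apply, RCLike.inner_apply]

lemma mem_orthogonal_span_range_iff {g : Fin k → EuclideanSpace ℂ (Fin m)}
    (y : EuclideanSpace ℂ (Fin m)) :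
    y ∈ (Submodule.span ℂ (Set.range g))ᗮ ↔ ∀ i, (inner ℂ (g i) y : ℂ) = 0 := by
  constructor
  · intro h i
    exact (Submodule.mem_orthogonal _ y).mp h _ (Submodule.subset_span ⟨i, rfl⟩)
  · intro h
    rw [Submodule.mem_orthogonal]
    intro u hu
    induction hu using Submodule.span_induction with
    | mem v hv => obtain ⟨i, rfl⟩ := hv; exact h i
    | zero => simp
    | add v w _ _ hv hw => rw [inner_add_left, hv, hw, add_zero]
    | smul c v _ hv => rw [inner_smul_left, hv, mul_zero]

lemma span_extract (A : Fin k → Matrix (Fin m) (Fin m) ℂ)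
    (hHerm : ∀ j, (A j).IsHermitian) (a x : Fin m → ℂ)
    (hx : x ∈ orthF A (orthF A {a})) (j : Fin k) :
    ∃ c : Fin k → ℂ, A j *ᵥ x = ∑ i, c i • (A i *ᵥ a) := by
  classical
  let g : Fin k → EuclideanSpace ℂ (Fin m) := fun i => WithLp.toLp 2 (A i *ᵥ a : Fin m → ℂ)
  let K : Submodule ℂ (EuclideanSpace ℂ (Fin m)) := Submodule.span ℂ (Set.range g)
  have hmem : ∀ y : Fin m → ℂ, y ∈ orthF A {a} ↔ (WithLp.toLp 2 y : EuclideanSpace ℂ (Fin m)) ∈ Kᗮ := by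
    intro y
    rw [mem_orthogonal_span_range_iff]
    constructor
    · intro hy i
      have h1 : Fform A y a = 0 := hy a rfl
      have h2 : hermInner ((A i) *ᵥ y) a = 0 := congrFun h1 i
      rw [hermSwap (hHerm i)] at h2
      rw [← hermInner_eq_inner]
      exact h2
    · intro hy z hz
      funext i
      rw [Set.mem_singleton_iff] at hz
      have := hy i
      rw [← hermInner_eq_inner] at this
      rw [Pi.zero_apply, hz]
      show hermInner ((A i) *ᵥ y) a = 0
      rw [hermSwap (hHerm i)]
      exact this
  let xE : EuclideanSpace ℂ (Fin m) := WithLp.toLp 2 (A j *ᵥ x)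
  have hAx : xE ∈ Kᗮᗮ := by
    rw [Submodule.mem_orthogonal]
    intro u hu
    have hu' : WithLp.ofLp u ∈ orthF A {a} := (hmem (WithLp.ofLp u)).mpr hu
    have := hx (WithLp.ofLp u) hu'
    have h2 : hermInner ((A j) *ᵥ x) (WithLp.ofLp u) = 0 := congrFun this j
    exact (hermInner_eq_inner xE u).symm.trans h2
  rw [Submodule.orthogonal_orthogonal] at hAx
  obtain ⟨c, hc⟩ := (Submodule.mem_span_range_iff_exists_fun ℂ).mp hAx
  refine ⟨c, ?_⟩
  have hc' := congrArg WithLp.ofLp hc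
  simpa [g, xE, WithLp.ofLp_sum] using hc'.symm

end span

lemma poly5 {c₀ c₁ c₂ c₃ c₄ : ℂ}
    (h : ∀ t : ℝ, c₀ + c₁*t + c₂*t^2 + c₃*t^3 + c₄*t^4 = 0) : c₁ = 0 ∧ c₂ = 0 := by
  have h0 := h 0; have h1 := h 1; have h2 := h 2; have hm1 := h (-1); have hm2 := h (-2)
  push_cast at h0 h1 h2 hm1 hm2
  constructor
  · linear_combination (2/3 : ℂ) * h1 - (2/3 : ℂ) * hm1 - (1/12 : ℂ) * h2 + (1/12 : ℂ) * hm2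
  · linear_combination (2/3 : ℂ) * h1 + (2/3 : ℂ) * hm1 - (5/4 : ℂ) * h0
      - (1/24 : ℂ) * h2 - (1/24 : ℂ) * hm2

section core
variable {m : ℕ}

lemma scalar_core (u v hP : ℂ) (E1 : hP = (u + v)^2) (E2 : hP = -((v - u)^2))
    (E3 : 2 * hP = ((u + v) - Complex.I * (u - v))^2) : u - v = 0 ∧ u + v = 0 := by
  have h4 : Complex.I * ((u + v) * (u - v)) = 0 := by
    linear_combination (1/2 : ℂ) * E3 - (1/2 : ℂ) * E1 - (1/2 : ℂ) * E2
      + ((u - v)^2/2) * Complex.I_mul_I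
  have hsd : (u + v) * (u - v) = 0 := (mul_eq_zero.mp h4).resolve_left Complex.I_ne_zero
  have hα : (u + v)^2 + (u - v)^2 = 0 := by linear_combination E2 - E1
  have hs3 : (u + v)^3 = 0 := by linear_combination (u + v) * hα - (u - v) * hsd
  have hs : u + v = 0 := pow_eq_zero_iff (by norm_num : (3:ℕ) ≠ 0) |>.mp hs3
  have hd2 : (u - v)^2 = 0 := by linear_combination hα - (u + v) * hs
  have hd : u - v = 0 := pow_eq_zero_iff (by norm_num : (2:ℕ) ≠ 0) |>.mp hd2
  exact ⟨hd, hs⟩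

lemma core_lemma (H : (Fin m → ℂ) → (Fin m → ℂ) → ℂ) (C : Matrix (Fin m) (Fin m) ℂ)
    (Hadd1 : ∀ x y z, H (x + y) z = H x z + H y z)
    (Hsmul1 : ∀ (c : ℂ) x z, H (c • x) z = c * H x z)
    (Hadd2 : ∀ x y z, H x (y + z) = H x y + H x z)
    (Hsmul2 : ∀ (c : ℂ) x z, H x (c • z) = (starRingEnd ℂ) c * H x z)
    (Hconj : ∀ x y, H y x = (starRingEnd ℂ) (H x y))
    (HC : ∀ x y, H (C *ᵥ x) y = H x (C *ᵥ y))
    (Hnd : ∀ x, (∀ b, H x b = 0) → x = 0)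
    (hD : ∀ y, H y y * H (C *ᵥ y) (C *ᵥ y) - H (C *ᵥ y) y * H (C *ᵥ y) y = 0)
    (a : Fin m → ℂ) (ha : H a a ≠ 0) :
    C *ᵥ a = (H (C *ᵥ a) a / H a a) • a := by
  classical
  obtain ⟨h₀, h₀def⟩ : ∃ c : ℂ, c = H a a := ⟨_, rfl⟩
  obtain ⟨μ, μdef⟩ : ∃ c : ℂ, c = H (C *ᵥ a) a := ⟨_, rfl⟩
  obtain ⟨lam, lamdef⟩ : ∃ c : ℂ, c = μ / h₀ := ⟨_, rfl⟩
  rw [← h₀def] at ha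
  rw [← h₀def, ← μdef, ← lamdef]
  have h₀c : (starRingEnd ℂ) h₀ = h₀ := by rw [h₀def, ← Hconj]
  have hμc : (starRingEnd ℂ) μ = μ := by rw [μdef, ← Hconj, ← HC]
  have hlamc : (starRingEnd ℂ) lam = lam := by rw [lamdef, map_div₀, h₀c, hμc]
  have hμlam : μ = lam * h₀ := by rw [lamdef]; field_simp
  have Hsub1 : ∀ x y z, H (x - y) z = H x z - H y z := by
    intro x y z
    have h := Hadd1 (x - y) y z
    rw [sub_add_cancel] at h
    linear_combination -h
  -- step 0
  have q2 : H (C *ᵥ a) (C *ᵥ a) = lam ^ 2 * h₀ := by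
    have hda := hD a
    rw [← h₀def, ← μdef] at hda
    have h' : h₀ * H (C *ᵥ a) (C *ᵥ a) = h₀ * (lam ^ 2 * h₀) := by
      linear_combination hda + (μ + lam * h₀) * hμlam
    exact mul_left_cancel₀ ha h'
  -- expansion helper
  have Hexp : ∀ (x y u v : Fin m → ℂ) (t : ℝ),
      H (x + (t : ℂ) • y) (u + (t : ℂ) • v)
      = H x u + (t : ℂ) * (H x v + H y u) + (t : ℂ)^2 * H y v := by
    intro x y u v t
    rw [Hadd1, Hadd2, Hadd2, Hsmul1, Hsmul2, Hsmul2, Hsmul1, Complex.conj_ofReal]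
    ring
  -- coefficient identities for each direction b
  have key : ∀ b : Fin m → ℂ,
      h₀ * (H (C *ᵥ a) (C *ᵥ b) + H (C *ᵥ b) (C *ᵥ a))
        + (H a b + H b a) * (lam^2 * h₀) - 2 * μ * (H (C *ᵥ a) b + H (C *ᵥ b) a) = 0
      ∧ h₀ * H (C *ᵥ b) (C *ᵥ b) + (H a b + H b a) * (H (C *ᵥ a) (C *ᵥ b) + H (C *ᵥ b) (C *ᵥ a))
        + H b b * (lam^2 * h₀) - 2 * μ * H (C *ᵥ b) b - (H (C *ᵥ a) b + H (C *ᵥ b) a)^2 = 0 := by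
    intro b
    have hpoly : ∀ t : ℝ,
        (h₀ * H (C *ᵥ a) (C *ᵥ a) - μ^2)
        + (h₀ * (H (C *ᵥ a) (C *ᵥ b) + H (C *ᵥ b) (C *ᵥ a))
            + (H a b + H b a) * H (C *ᵥ a) (C *ᵥ a) - 2 * μ * (H (C *ᵥ a) b + H (C *ᵥ b) a)) * t
        + (h₀ * H (C *ᵥ b) (C *ᵥ b)
            + (H a b + H b a) * (H (C *ᵥ a) (C *ᵥ b) + H (C *ᵥ b) (C *ᵥ a))
            + H b b * H (C *ᵥ a) (C *ᵥ a) - 2 * μ * H (C *ᵥ b) b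
            - (H (C *ᵥ a) b + H (C *ᵥ b) a)^2) * t^2
        + ((H a b + H b a) * H (C *ᵥ b) (C *ᵥ b)
            + H b b * (H (C *ᵥ a) (C *ᵥ b) + H (C *ᵥ b) (C *ᵥ a))
            - 2 * (H (C *ᵥ a) b + H (C *ᵥ b) a) * H (C *ᵥ b) b) * t^3
        + (H b b * H (C *ᵥ b) (C *ᵥ b) - H (C *ᵥ b) b ^ 2) * t^4 = 0 := by
      intro t
      have hd := hD (a + (t : ℂ) • b)
      rw [show C *ᵥ (a + (t : ℂ) • b) = C *ᵥ a + (t : ℂ) • (C *ᵥ b) by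
        rw [Matrix.mulVec_add, Matrix.mulVec_smul]] at hd
      rw [Hexp, Hexp, Hexp] at hd
      rw [← h₀def, ← μdef] at hd
      linear_combination hd
    obtain ⟨hc1, hc2⟩ := poly5 hpoly
    constructor
    · linear_combination hc1 - (H a b + H b a) * q2
    · linear_combination hc2 - H b b * q2
  -- first-order consequence
  have hSsum : ∀ b : Fin m → ℂ,
      (H (C *ᵥ a) (C *ᵥ b) - 2*lam*H (C *ᵥ a) b + lam^2 * H a b)
      + (starRingEnd ℂ) (H (C *ᵥ a) (C *ᵥ b) - 2*lam*H (C *ᵥ a) b + lam^2 * H a b) = 0 := by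
    intro b
    have hc1 := (key b).1
    have e1 : H b a = (starRingEnd ℂ) (H a b) := Hconj a b
    have e2 : H (C *ᵥ b) (C *ᵥ a) = (starRingEnd ℂ) (H (C *ᵥ a) (C *ᵥ b)) := Hconj _ _
    have e3 : H (C *ᵥ b) a = (starRingEnd ℂ) (H (C *ᵥ a) b) := by
      rw [Hconj a (C *ᵥ b), ← HC a b]
    rw [e1, e2, e3, hμlam] at hc1
    have hdiv : h₀ * (((H (C *ᵥ a) (C *ᵥ b) - 2*lam*H (C *ᵥ a) b + lam^2 * H a b))
        + (starRingEnd ℂ) (H (C *ᵥ a) (C *ᵥ b) - 2*lam*H (C *ᵥ a) b + lam^2 * H a b)) = 0 := by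
      simp only [map_sub, map_add, _root_.map_mul, map_pow, map_ofNat, hlamc]
      linear_combination hc1
    exact (mul_eq_zero.mp hdiv).resolve_left ha
  have hS0 : ∀ b : Fin m → ℂ,
      H (C *ᵥ a) (C *ᵥ b) - 2*lam*H (C *ᵥ a) b + lam^2 * H a b = 0 := by
    intro b
    have h1 := hSsum b
    have h2 := hSsum (Complex.I • b)
    rw [show C *ᵥ (Complex.I • b) = Complex.I • (C *ᵥ b) from Matrix.mulVec_smul C _ b,
      Hsmul2, Hsmul2, Hsmul2, Complex.conj_I] at h2
    have harg : (-Complex.I * H (C *ᵥ a) (C *ᵥ b) - 2*lam*(-Complex.I * H (C *ᵥ a) b)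
        + lam^2 * (-Complex.I * H a b))
        = -Complex.I * (H (C *ᵥ a) (C *ᵥ b) - 2*lam*H (C *ᵥ a) b + lam^2 * H a b) := by ring
    rw [harg, _root_.map_mul, map_neg, Complex.conj_I, neg_neg] at h2
    have h2' : Complex.I * ((starRingEnd ℂ) (H (C *ᵥ a) (C *ᵥ b) - 2*lam*H (C *ᵥ a) b
        + lam^2 * H a b) - (H (C *ᵥ a) (C *ᵥ b) - 2*lam*H (C *ᵥ a) b + lam^2 * H a b)) = 0 := by
      linear_combination h2
    have h2'' := (mul_eq_zero.mp h2').resolve_left Complex.I_ne_zero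
    linear_combination (h1 - h2'') / 2
  -- conjugate of hS0
  have hS0c : ∀ b : Fin m → ℂ,
      (starRingEnd ℂ) (H (C *ᵥ a) (C *ᵥ b)) - 2*lam*(starRingEnd ℂ) (H (C *ᵥ a) b)
        + lam^2 * (starRingEnd ℂ) (H a b) = 0 := by
    intro b
    have h := congrArg (starRingEnd ℂ) (hS0 b)
    simp only [map_sub, map_add, _root_.map_mul, map_pow, map_ofNat, hlamc, map_zero] at h
    linear_combination h
  -- second-order consequence
  have hkey2 : ∀ b : Fin m → ℂ,
      h₀ * (H (C *ᵥ b) (C *ᵥ b) - 2*lam*H (C *ᵥ b) b + lam^2 * H b b)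
      = ((H (C *ᵥ a) b + (starRingEnd ℂ) (H (C *ᵥ a) b))
          - lam * (H a b + (starRingEnd ℂ) (H a b)))^2 := by
    intro b
    have hc2 := (key b).2
    have e1 : H b a = (starRingEnd ℂ) (H a b) := Hconj a b
    have e2 : H (C *ᵥ b) (C *ᵥ a) = (starRingEnd ℂ) (H (C *ᵥ a) (C *ᵥ b)) := Hconj _ _
    have e3 : H (C *ᵥ b) a = (starRingEnd ℂ) (H (C *ᵥ a) b) := by
      rw [Hconj a (C *ᵥ b), ← HC a b]
    rw [e1, e2, e3, hμlam] at hc2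
    linear_combination hc2 - (H a b + (starRingEnd ℂ) (H a b)) * (hS0 b)
      - (H a b + (starRingEnd ℂ) (H a b)) * (hS0c b)
  -- kill the linear functional
  have hrho : ∀ b : Fin m → ℂ, H (C *ᵥ a) b - lam * H a b = 0 := by
    intro b
    have E1 : h₀ * (H (C *ᵥ b) (C *ᵥ b) - 2*lam*H (C *ᵥ b) b + lam^2 * H b b)
        = ((H (C *ᵥ a) b - lam * H a b)
          + ((starRingEnd ℂ) (H (C *ᵥ a) b) - lam * (starRingEnd ℂ) (H a b)))^2 := by
      linear_combination hkey2 b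
    have E2raw := hkey2 (Complex.I • b)
    rw [show C *ᵥ (Complex.I • b) = Complex.I • (C *ᵥ b) from Matrix.mulVec_smul C _ b] at E2raw
    simp only [Hsmul1, Hsmul2, Complex.conj_I, _root_.map_mul, _root_.map_neg,
      Complex.conj_conj, neg_neg] at E2raw
    have E2 : h₀ * (H (C *ᵥ b) (C *ᵥ b) - 2*lam*H (C *ᵥ b) b + lam^2 * H b b)
        = -((((starRingEnd ℂ) (H (C *ᵥ a) b) - lam * (starRingEnd ℂ) (H a b))
            - (H (C *ᵥ a) b - lam * H a b))^2) := by
      linear_combination E2raw + (h₀ * (H (C *ᵥ b) (C *ᵥ b) - 2*lam*H (C *ᵥ b) b + lam^2 * H b b)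
        + (((starRingEnd ℂ) (H (C *ᵥ a) b) - lam * (starRingEnd ℂ) (H a b))
            - (H (C *ᵥ a) b - lam * H a b))^2) * Complex.I_mul_I
    have E3raw := hkey2 ((1 + Complex.I) • b)
    rw [show C *ᵥ ((1 + Complex.I) • b) = (1 + Complex.I) • (C *ᵥ b) from
      Matrix.mulVec_smul C _ b] at E3raw
    simp only [Hsmul1, Hsmul2, Complex.conj_I, _root_.map_mul, _root_.map_neg, map_add,
      _root_.map_one, Complex.conj_conj, neg_neg] at E3raw
    have E3 : 2 * (h₀ * (H (C *ᵥ b) (C *ᵥ b) - 2*lam*H (C *ᵥ b) b + lam^2 * H b b))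
        = (((H (C *ᵥ a) b - lam * H a b)
            + ((starRingEnd ℂ) (H (C *ᵥ a) b) - lam * (starRingEnd ℂ) (H a b)))
          - Complex.I * ((H (C *ᵥ a) b - lam * H a b)
            - ((starRingEnd ℂ) (H (C *ᵥ a) b) - lam * (starRingEnd ℂ) (H a b))))^2 := by
      linear_combination E3raw
        + (h₀ * (H (C *ᵥ b) (C *ᵥ b) - 2*lam*H (C *ᵥ b) b + lam^2 * H b b)) * Complex.I_mul_I
    have hc := scalar_core _ _ _ E1 E2 E3
    linear_combination (hc.1 + hc.2) / 2
  have hfin : ∀ b : Fin m → ℂ, H (C *ᵥ a - lam • a) b = 0 := by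
    intro b
    rw [Hsub1, Hsmul1]
    exact hrho b
  have := Hnd _ hfin
  rw [sub_eq_zero] at this
  exact this
end core


section helpers
variable {m k : ℕ}

lemma cont_of_an {f : (Fin m → ℂ) → ℂ} (hf : AnalyticOnNhd ℝ f Set.univ) : Continuous f := by
  rw [← continuousOn_univ]; exact hf.continuousOn

lemma Fform_zero (A : Fin k → Matrix (Fin m) (Fin m) ℂ) (y : Fin m → ℂ) :
    Fform A 0 y = 0 := by
  funext j
  simp [Fform, Matrix.mulVec_zero, hermInner_zero_left]

lemma zero_mem_goal (A : Fin k → Matrix (Fin m) (Fin m) ℂ) (a : Fin m → ℂ) :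
    (0 : Fin m → ℂ) ∈ orthF A (orthF A {a}) ∩ orthF A {a} :=
  ⟨fun y _ => Fform_zero A y, fun y _ => Fform_zero A y⟩

end helpers

theorem stmt14 {m k : ℕ} (hm : 0 < m) (hk : 0 < k) (hk2 : k ≤ 2)
    (A : Fin k → Matrix (Fin m) (Fin m) ℂ) (hHerm : ∀ j, (A j).IsHermitian)
    (hnd : FNondeg A) :
    ∃ U : Set (Fin m → ℂ), IsOpen U ∧ Dense U ∧
      ∀ a ∈ U, orthF A (orthF A {a}) ∩ orthF A {a} = {0} := by
  classical
  obtain rfl | rfl : k = 1 ∨ k = 2 := by omega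
  · -- k = 1
    have hH0 := hHerm 0
    have hker : ∀ ζ : Fin m → ℂ, (A 0) *ᵥ ζ = 0 → ζ = 0 := by
      intro ζ h
      apply hnd.2
      intro z
      funext j
      have hj : j = 0 := Subsingleton.elim j 0
      subst hj
      show hermInner ((A 0) *ᵥ z) ζ = 0
      rw [hermSwap hH0, h, hermInner_zero_right]
    have hvne : (A 0) *ᵥ (Pi.single ⟨0, hm⟩ 1) ≠ 0 := by
      intro h
      have := hker _ h
      exact one_ne_zero (congrFun this ⟨0, hm⟩ |>.symm.trans (Pi.single_eq_same _ _)).symm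
    obtain ⟨a₀, ha₀⟩ := exists_q_ne (A 0) hvne
    have hqan : AnalyticOnNhd ℝ (fun a => hermInner ((A 0) *ᵥ a) a) Set.univ := by
      have e : (fun a : Fin m → ℂ => hermInner ((A 0) *ᵥ a) a)
          = fun a => hermInner ((A 0) *ᵥ a) ((1 : Matrix (Fin m) (Fin m) ℂ) *ᵥ a) := by
        funext a; rw [Matrix.one_mulVec]
      rw [e]; exact analytic_sesq _ _
    obtain ⟨hopen, hdense⟩ := open_dense_ne hqan ha₀
    refine ⟨{a | hermInner ((A 0) *ᵥ a) a ≠ 0}, hopen, hdense, ?_⟩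
    intro a ha
    ext x
    simp only [Set.mem_inter_iff, Set.mem_singleton_iff]
    constructor
    · rintro ⟨hx1, hx2⟩
      obtain ⟨c, hc⟩ := span_extract A hHerm a x hx1 0
      rw [Fin.sum_univ_one] at hc
      have hx0 : x = c 0 • a := by
        have h1 : (A 0) *ᵥ (x - c 0 • a) = 0 := by
          rw [Matrix.mulVec_sub, Matrix.mulVec_smul, hc, sub_self]
        have := hker _ h1
        rwa [sub_eq_zero] at this
      have horth : Fform A x a = 0 := hx2 a rfl
      have h0 : hermInner ((A 0) *ᵥ x) a = 0 := by
        have := congrFun horth 0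
        simpa [Fform] using this
      rw [hx0, Matrix.mulVec_smul, hermInner_smul_left] at h0
      have hc0 : c 0 = 0 := (mul_eq_zero.mp h0).resolve_right ha
      rw [hx0, hc0, zero_smul]
    · rintro rfl
      exact zero_mem_goal A a
  · -- k = 2
    have hH0 := hHerm 0
    have hH1 := hHerm 1
    have hker : ∀ ζ : Fin m → ℂ, (A 0) *ᵥ ζ = 0 → (A 1) *ᵥ ζ = 0 → ζ = 0 := by
      intro ζ h0 h1
      apply hnd.2
      intro z
      funext j
      fin_cases j
      · show hermInner ((A 0) *ᵥ z) ζ = 0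
        rw [hermSwap hH0, h0, hermInner_zero_right]
      · show hermInner ((A 1) *ᵥ z) ζ = 0
        rw [hermSwap hH1, h1, hermInner_zero_right]
    have hHt : ∀ t : ℝ, (A 0 + (t:ℂ) • A 1).IsHermitian := by
      intro t
      show (A 0 + (t:ℂ) • A 1)ᴴ = _
      rw [Matrix.conjTranspose_add, Matrix.conjTranspose_smul, hH0.eq, hH1.eq]
      congr 1
      simp [Complex.star_def, Complex.conj_ofReal]
    have hA0ne : A 0 ≠ 0 := hnd.1.ne_zero 0
    obtain ⟨v₀, hv₀⟩ := exists_mulVec_ne (A 0) hA0ne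
    obtain ⟨aq, haq⟩ := exists_q_ne (A 0) hv₀
    have hqan : AnalyticOnNhd ℝ (fun a => hermInner ((A 0) *ᵥ a) a) Set.univ := by
      have e : (fun a : Fin m → ℂ => hermInner ((A 0) *ᵥ a) a)
          = fun a => hermInner ((A 0) *ᵥ a) ((1 : Matrix (Fin m) (Fin m) ℂ) *ᵥ a) := by
        funext a; rw [Matrix.one_mulVec]
      rw [e]; exact analytic_sesq _ _
    by_cases hsing : ∀ t : ℝ, (A 0 + (t:ℂ) • A 1).det = 0
    · -- singular pencil case
      have hnull : ∀ t : ℝ, ∃ n, n ≠ 0 ∧ (A 0 + (t:ℂ) • A 1) *ᵥ n = 0 := by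
        intro t
        exact (Matrix.exists_mulVec_eq_zero_iff).mpr (hsing t)
      have hBn : ∀ (t : ℝ) n, n ≠ 0 → (A 0 + (t:ℂ) • A 1) *ᵥ n = 0 → (A 1) *ᵥ n ≠ 0 := by
        intro t n hn hv hB1
        apply hn
        apply hker n ?_ hB1
        rw [Matrix.add_mulVec, Matrix.smul_mulVec, hB1, smul_zero, add_zero] at hv
        exact hv
      obtain ⟨n₀, hn₀, hnv₀⟩ := hnull 0
      obtain ⟨np, hnp, hnvp⟩ := hnull 1
      obtain ⟨nm, hnm, hnvm⟩ := hnull (-1)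
      have hw₀ := hBn 0 n₀ hn₀ hnv₀
      have hwp := hBn 1 np hnp hnvp
      have hwm := hBn (-1) nm hnm hnvm
      -- the linear functionals a ↦ ⟨A₁ a, n⟩ are analytic and nonzero somewhere
      have hfan : ∀ n : Fin m → ℂ, AnalyticOnNhd ℝ (fun a => hermInner ((A 1) *ᵥ a) n) Set.univ :=
        fun n => analytic_hermInner_lin (A 1) n
      have hfne : ∀ n : Fin m → ℂ, (A 1) *ᵥ n ≠ 0 → ∃ a, hermInner ((A 1) *ᵥ a) n ≠ 0 := by
        intro n hn
        refine ⟨(A 1) *ᵥ n, ?_⟩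
        rw [hermSwap hH1]
        exact fun h => hn (hermInner_self_eq_zero h)
      obtain ⟨b₀, hb₀⟩ := hfne n₀ hw₀
      obtain ⟨bp, hbp⟩ := hfne np hwp
      obtain ⟨bm, hbm⟩ := hfne nm hwm
      obtain ⟨ho1, hd1⟩ := open_dense_ne hqan haq
      obtain ⟨ho2, hd2⟩ := open_dense_ne (hfan n₀) hb₀
      obtain ⟨ho3, hd3⟩ := open_dense_ne (hfan np) hbp
      obtain ⟨ho4, hd4⟩ := open_dense_ne (hfan nm) hbm
      refine ⟨{a | hermInner ((A 0) *ᵥ a) a ≠ 0} ∩ ({a | hermInner ((A 1) *ᵥ a) n₀ ≠ 0}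
        ∩ ({a | hermInner ((A 1) *ᵥ a) np ≠ 0} ∩ {a | hermInner ((A 1) *ᵥ a) nm ≠ 0})),
        ho1.inter (ho2.inter (ho3.inter ho4)), ?_, ?_⟩
      · exact hd1.inter_of_isOpen_left
          ((hd2.inter_of_isOpen_left ((hd3.inter_of_isOpen_left hd4 ho3)) ho2)) ho1
      intro a ha
      obtain ⟨haq', hw0', hwp', hwm'⟩ :
          hermInner ((A 0) *ᵥ a) a ≠ 0 ∧ hermInner ((A 1) *ᵥ a) n₀ ≠ 0
          ∧ hermInner ((A 1) *ᵥ a) np ≠ 0 ∧ hermInner ((A 1) *ᵥ a) nm ≠ 0 := by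
        obtain ⟨h1, h2, h3, h4⟩ := ha
        exact ⟨h1, h2, h3, h4⟩
      ext x
      simp only [Set.mem_inter_iff, Set.mem_singleton_iff]
      constructor
      · rintro ⟨hx1, hx2⟩
        obtain ⟨c, hc⟩ := span_extract A hHerm a x hx1 0
        rw [Fin.sum_univ_two] at hc
        obtain ⟨d, hd⟩ := span_extract A hHerm a x hx1 1
        rw [Fin.sum_univ_two] at hd
        have hEq : ∀ (t : ℝ) n, (A 0 + (t:ℂ) • A 1) *ᵥ n = 0 →
            (c 1 + (t:ℂ)*(d 1 - c 0) - (t:ℂ)^2 * d 0) * hermInner ((A 1) *ᵥ a) n = 0 := by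
          intro t n hv
          have hx' : hermInner ((A 0) *ᵥ x) n + (t:ℂ) * hermInner ((A 1) *ᵥ x) n = 0 := by
            have h1 : hermInner ((A 0 + (t:ℂ) • A 1) *ᵥ x) n = 0 := by
              rw [hermSwap (hHt t), hv, hermInner_zero_right]
            rw [Matrix.add_mulVec, Matrix.smul_mulVec, hermInner_add_left,
              hermInner_smul_left] at h1
            exact h1
          have ha' : hermInner ((A 0) *ᵥ a) n + (t:ℂ) * hermInner ((A 1) *ᵥ a) n = 0 := by
            have h1 : hermInner ((A 0 + (t:ℂ) • A 1) *ᵥ a) n = 0 := by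
              rw [hermSwap (hHt t), hv, hermInner_zero_right]
            rw [Matrix.add_mulVec, Matrix.smul_mulVec, hermInner_add_left,
              hermInner_smul_left] at h1
            exact h1
          have hc' : hermInner ((A 0) *ᵥ x) n
              = c 0 * hermInner ((A 0) *ᵥ a) n + c 1 * hermInner ((A 1) *ᵥ a) n := by
            rw [hc, hermInner_add_left, hermInner_smul_left, hermInner_smul_left]
          have hd' : hermInner ((A 1) *ᵥ x) n
              = d 0 * hermInner ((A 0) *ᵥ a) n + d 1 * hermInner ((A 1) *ᵥ a) n := by
            rw [hd, hermInner_add_left, hermInner_smul_left, hermInner_smul_left]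
          linear_combination hx' - hc' - (t:ℂ) * hd' - (c 0 + (t:ℂ) * d 0) * ha'
        have h00 := hEq 0 n₀ hnv₀
        have h01 := hEq 1 np hnvp
        have h02 := hEq (-1) nm hnvm
        push_cast at h00 h01 h02
        have hc1 : c 1 = 0 := by
          have := (mul_eq_zero.mp h00).resolve_right hw0'
          linear_combination this
        have e01 : (c 1 + (d 1 - c 0) - d 0) = 0 :=
          (mul_eq_zero.mp (by linear_combination h01)).resolve_right hwp'
        have e02 : (c 1 - (d 1 - c 0) - d 0) = 0 :=
          (mul_eq_zero.mp (by linear_combination h02)).resolve_right hwm'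
        have hd0 : d 0 = 0 := by linear_combination hc1 - (e01 + e02) / 2
        have hd1c : d 1 = c 0 := by linear_combination (e01 - e02) / 2
        have hx0 : x = c 0 • a := by
          have h1 : (A 0) *ᵥ (x - c 0 • a) = 0 := by
            rw [Matrix.mulVec_sub, Matrix.mulVec_smul, hc, hc1, zero_smul, add_zero, sub_self]
          have h2 : (A 1) *ᵥ (x - c 0 • a) = 0 := by
            rw [Matrix.mulVec_sub, Matrix.mulVec_smul, hd, hd0, hd1c, zero_smul, zero_add,
              sub_self]
          have := hker _ h1 h2
          rwa [sub_eq_zero] at this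
        have horth : Fform A x a = 0 := hx2 a rfl
        have h0 : hermInner ((A 0) *ᵥ x) a = 0 := by
          have := congrFun horth 0
          simpa [Fform] using this
        rw [hx0, Matrix.mulVec_smul, hermInner_smul_left] at h0
        have hc0 : c 0 = 0 := (mul_eq_zero.mp h0).resolve_right haq'
        rw [hx0, hc0, zero_smul]
      · rintro rfl
        exact zero_mem_goal A a
    · -- regular pencil case
      push_neg at hsing
      obtain ⟨t₀, hdet⟩ := hsing
      set A' : Matrix (Fin m) (Fin m) ℂ := A 0 + (t₀:ℂ) • A 1 with hA'def
      have hA'H : A'.IsHermitian := hHt t₀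
      have hdu : IsUnit A'.det := isUnit_iff_ne_zero.mpr hdet
      set C : Matrix (Fin m) (Fin m) ℂ := A'⁻¹ * A 1 with hCdef
      have hAC : A' * C = A 1 := by
        rw [hCdef, ← Matrix.mul_assoc, Matrix.mul_nonsing_inv _ hdu, Matrix.one_mul]
      have hCe : ∀ z, A' *ᵥ (C *ᵥ z) = (A 1) *ᵥ z := by
        intro z; rw [Matrix.mulVec_mulVec, hAC]
      have hA'inj : ∀ x : Fin m → ℂ, A' *ᵥ x = 0 → x = 0 := by
        intro x h
        have h2 : A'⁻¹ *ᵥ (A' *ᵥ x) = 0 := by rw [h, Matrix.mulVec_zero]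
        rwa [Matrix.mulVec_mulVec, Matrix.nonsing_inv_mul _ hdu, Matrix.one_mulVec] at h2
      have HCprop : ∀ x y : Fin m → ℂ,
          hermInner (A' *ᵥ (C *ᵥ x)) y = hermInner (A' *ᵥ x) (C *ᵥ y) := by
        intro x y
        calc hermInner (A' *ᵥ (C *ᵥ x)) y = hermInner ((A 1) *ᵥ x) y := by rw [hCe]
          _ = hermInner x ((A 1) *ᵥ y) := hermSwap hH1 x y
          _ = hermInner x (A' *ᵥ (C *ᵥ y)) := by rw [hCe]
          _ = hermInner (A' *ᵥ x) (C *ᵥ y) := (hermSwap hA'H x (C *ᵥ y)).symm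
      by_cases hDall : ∀ y : Fin m → ℂ,
          hermInner (A' *ᵥ y) y * hermInner (A' *ᵥ (C *ᵥ y)) (C *ᵥ y)
            - hermInner (A' *ᵥ (C *ᵥ y)) y * hermInner (A' *ᵥ (C *ᵥ y)) y = 0
      · exfalso
        have hcore := core_lemma (fun x y => hermInner (A' *ᵥ x) y) C
          (fun x y z => by
            show hermInner (A' *ᵥ (x + y)) z = hermInner (A' *ᵥ x) z + hermInner (A' *ᵥ y) z
            rw [Matrix.mulVec_add, hermInner_add_left])
          (fun cc x z => by
            show hermInner (A' *ᵥ (cc • x)) z = cc * hermInner (A' *ᵥ x) z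
            rw [Matrix.mulVec_smul, hermInner_smul_left])
          (fun x y z => by
            show hermInner (A' *ᵥ x) (y + z) = hermInner (A' *ᵥ x) y + hermInner (A' *ᵥ x) z
            rw [hermInner_add_right])
          (fun cc x z => by
            show hermInner (A' *ᵥ x) (cc • z) = (starRingEnd ℂ) cc * hermInner (A' *ᵥ x) z
            rw [hermInner_smul_right])
          (fun x y => by
            show hermInner (A' *ᵥ y) x = (starRingEnd ℂ) (hermInner (A' *ᵥ x) y)
            rw [hermInner_conj, hermSwap hA'H])
          HCprop
          (fun x hx => hA'inj x (hermInner_self_eq_zero (hx (A' *ᵥ x))))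
          hDall
        have hvA' : A' *ᵥ (Pi.single ⟨0, hm⟩ 1) ≠ 0 := by
          intro h
          have := hA'inj _ h
          exact one_ne_zero (congrFun this ⟨0, hm⟩ |>.symm.trans (Pi.single_eq_same _ _)).symm
        obtain ⟨a₀, ha₀⟩ := exists_q_ne A' hvA'
        have hq'an : AnalyticOnNhd ℝ (fun a => hermInner (A' *ᵥ a) a) Set.univ := by
          have e : (fun a : Fin m → ℂ => hermInner (A' *ᵥ a) a)
              = fun a => hermInner (A' *ᵥ a) ((1 : Matrix (Fin m) (Fin m) ℂ) *ᵥ a) := by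
            funext a; rw [Matrix.one_mulVec]
          rw [e]; exact analytic_sesq _ _
        obtain ⟨_, hdense⟩ := open_dense_ne hq'an ha₀
        have hmin : ∀ (a : Fin m → ℂ) i j, (C *ᵥ a) i * a j = (C *ᵥ a) j * a i := by
          intro a i j
          have hfun : (fun a : Fin m → ℂ => (C *ᵥ a) i * a j)
              = fun a => (C *ᵥ a) j * a i := by
            apply Continuous.ext_on hdense
            · exact (cont_of_an (analytic_mulVec_entry C i)).mul (continuous_apply j)
            · exact (cont_of_an (analytic_mulVec_entry C j)).mul (continuous_apply i)
            · intro b hb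
              have hcb := hcore b hb
              show (C *ᵥ b) i * b j = (C *ᵥ b) j * b i
              rw [hcb]
              simp only [Pi.smul_apply, smul_eq_mul]
              ring
          exact congrFun hfun a
        obtain ⟨cc, hcC⟩ := scalar_of_minors hm C hmin
        have hA1c : A 1 = cc • A' := by
          rw [← hAC, hcC, Matrix.mul_smul, Matrix.mul_one]
        have hA'ne0 : A' ≠ 0 := by
          intro h
          apply hvA'
          rw [h, Matrix.zero_mulVec]
        obtain ⟨i0, j0, hij0⟩ : ∃ i j, A' i j ≠ 0 := by
          by_contra hcon
          push_neg at hcon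
          exact hA'ne0 (by ext i j; exact hcon i j)
        have hcreal : (starRingEnd ℂ) cc = cc := by
          have h1 : (cc • A')ᴴ = cc • A' := by rw [← hA1c]; exact hH1
          rw [Matrix.conjTranspose_smul, hA'H.eq] at h1
          have h2 := congrFun (congrFun h1 i0) j0
          simp only [Matrix.smul_apply, smul_eq_mul] at h2
          have h3 := mul_right_cancel₀ hij0 h2
          simpa [Complex.star_def] using h3
        have hre : ((cc.re : ℝ) : ℂ) = cc := Complex.conj_eq_iff_re.mp hcreal
        have hli := Fintype.linearIndependent_iff.mp hnd.1
        have hsum : ∑ i : Fin 2, (![-cc.re, 1 - cc.re * t₀] : Fin 2 → ℝ) i • A i = 0 := by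
          rw [Fin.sum_univ_two]
          ext i j
          have hentry := congrFun (congrFun hA1c i) j
          simp only [Matrix.smul_apply, smul_eq_mul, hA'def, Matrix.add_apply] at hentry
          simp only [Matrix.add_apply, Matrix.smul_apply, Matrix.zero_apply,
            Matrix.cons_val_zero, Matrix.cons_val_one, Matrix.head_cons,
            Complex.real_smul, smul_eq_mul]
          push_cast
          linear_combination hentry - (A 0 i j + (t₀:ℂ) * A 1 i j) * hre
        have hg0 := hli _ hsum 0
        have hg1 := hli _ hsum 1
        simp only [Matrix.cons_val_zero, Matrix.cons_val_one, Matrix.head_cons,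
          neg_eq_zero] at hg0 hg1
        rw [hg0] at hg1
        norm_num at hg1
      · push_neg at hDall
        obtain ⟨a₀, ha₀⟩ := hDall
        have hDan : AnalyticOnNhd ℝ (fun y : Fin m → ℂ =>
            hermInner (A' *ᵥ y) y * hermInner (A' *ᵥ (C *ᵥ y)) (C *ᵥ y)
            - hermInner (A' *ᵥ (C *ᵥ y)) y * hermInner (A' *ᵥ (C *ᵥ y)) y) Set.univ := by
          have e : (fun y : Fin m → ℂ =>
              hermInner (A' *ᵥ y) y * hermInner (A' *ᵥ (C *ᵥ y)) (C *ᵥ y)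
              - hermInner (A' *ᵥ (C *ᵥ y)) y * hermInner (A' *ᵥ (C *ᵥ y)) y)
              = fun y => hermInner (A' *ᵥ y) ((1 : Matrix (Fin m) (Fin m) ℂ) *ᵥ y)
                  * hermInner ((A' * C) *ᵥ y) (C *ᵥ y)
                - hermInner ((A' * C) *ᵥ y) ((1 : Matrix (Fin m) (Fin m) ℂ) *ᵥ y)
                  * hermInner ((A' * C) *ᵥ y) ((1 : Matrix (Fin m) (Fin m) ℂ) *ᵥ y) := by
            funext y
            rw [Matrix.one_mulVec, Matrix.mulVec_mulVec]
          rw [e]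
          exact ((analytic_sesq _ _).mul (analytic_sesq _ _)).sub
            ((analytic_sesq _ _).mul (analytic_sesq _ _))
        obtain ⟨hopen, hdense⟩ := open_dense_ne hDan ha₀
        refine ⟨_, hopen, hdense, ?_⟩
        intro a ha
        have haD : hermInner (A' *ᵥ a) a * hermInner (A' *ᵥ (C *ᵥ a)) (C *ᵥ a)
            - hermInner (A' *ᵥ (C *ᵥ a)) a * hermInner (A' *ᵥ (C *ᵥ a)) a ≠ 0 := ha
        ext x
        simp only [Set.mem_inter_iff, Set.mem_singleton_iff]
        constructor
        · rintro ⟨hx1, hx2⟩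
          obtain ⟨c, hc⟩ := span_extract A hHerm a x hx1 0
          rw [Fin.sum_univ_two] at hc
          obtain ⟨d, hd⟩ := span_extract A hHerm a x hx1 1
          rw [Fin.sum_univ_two] at hd
          have hx' : A' *ᵥ x = A' *ᵥ ((c 0 + (t₀:ℂ) * d 0) • a
              + (c 1 + (t₀:ℂ) * d 1 - (t₀:ℂ) * (c 0 + (t₀:ℂ) * d 0)) • (C *ᵥ a)) := by
            rw [Matrix.mulVec_add, Matrix.mulVec_smul, Matrix.mulVec_smul, hCe]
            rw [show A' *ᵥ x = (A 0) *ᵥ x + (t₀:ℂ) • ((A 1) *ᵥ x) by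
              rw [hA'def, Matrix.add_mulVec, Matrix.smul_mulVec]]
            rw [show A' *ᵥ a = (A 0) *ᵥ a + (t₀:ℂ) • ((A 1) *ᵥ a) by
              rw [hA'def, Matrix.add_mulVec, Matrix.smul_mulVec]]
            rw [hc, hd]
            module
          have hx0 : x = (c 0 + (t₀:ℂ) * d 0) • a
              + (c 1 + (t₀:ℂ) * d 1 - (t₀:ℂ) * (c 0 + (t₀:ℂ) * d 0)) • (C *ᵥ a) := by
            have h4 : A' *ᵥ (x - ((c 0 + (t₀:ℂ) * d 0) • a
                + (c 1 + (t₀:ℂ) * d 1 - (t₀:ℂ) * (c 0 + (t₀:ℂ) * d 0)) • (C *ᵥ a))) = 0 := by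
              rw [Matrix.mulVec_sub, hx', sub_self]
            have := hA'inj _ h4
            rwa [sub_eq_zero] at this
          have horth : Fform A x a = 0 := hx2 a rfl
          have h1 : hermInner ((A 0) *ᵥ x) a = 0 := by simpa [Fform] using congrFun horth 0
          have h2 : hermInner ((A 1) *ᵥ x) a = 0 := by simpa [Fform] using congrFun horth 1
          have hA'x : hermInner (A' *ᵥ x) a = 0 := by
            rw [show A' *ᵥ x = (A 0) *ᵥ x + (t₀:ℂ) • ((A 1) *ᵥ x) by
              rw [hA'def, Matrix.add_mulVec, Matrix.smul_mulVec]]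
            rw [hermInner_add_left, hermInner_smul_left, h1, h2]
            ring
          have e1 : (c 0 + (t₀:ℂ) * d 0) * hermInner (A' *ᵥ a) a
              + (c 1 + (t₀:ℂ) * d 1 - (t₀:ℂ) * (c 0 + (t₀:ℂ) * d 0))
                * hermInner (A' *ᵥ (C *ᵥ a)) a = 0 := by
            have h5 := hA'x
            rw [hx0, Matrix.mulVec_add, Matrix.mulVec_smul, Matrix.mulVec_smul,
              hermInner_add_left, hermInner_smul_left, hermInner_smul_left] at h5
            exact h5
          have e2 : (c 0 + (t₀:ℂ) * d 0) * hermInner (A' *ᵥ (C *ᵥ a)) a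
              + (c 1 + (t₀:ℂ) * d 1 - (t₀:ℂ) * (c 0 + (t₀:ℂ) * d 0))
                * hermInner (A' *ᵥ (C *ᵥ a)) (C *ᵥ a) = 0 := by
            have h5 := h2
            rw [hx0, Matrix.mulVec_add, Matrix.mulVec_smul, Matrix.mulVec_smul,
              hermInner_add_left, hermInner_smul_left, hermInner_smul_left] at h5
            rw [show (A 1) *ᵥ a = A' *ᵥ (C *ᵥ a) from (hCe a).symm,
              show (A 1) *ᵥ (C *ᵥ a) = A' *ᵥ (C *ᵥ (C *ᵥ a)) from (hCe (C *ᵥ a)).symm,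
              HCprop (C *ᵥ a) a] at h5
            exact h5
          have hαz : (c 0 + (t₀:ℂ) * d 0) = 0 := by
            have h3 : (c 0 + (t₀:ℂ) * d 0) * (hermInner (A' *ᵥ a) a
                * hermInner (A' *ᵥ (C *ᵥ a)) (C *ᵥ a)
                - hermInner (A' *ᵥ (C *ᵥ a)) a * hermInner (A' *ᵥ (C *ᵥ a)) a) = 0 := by
              linear_combination hermInner (A' *ᵥ (C *ᵥ a)) (C *ᵥ a) * e1
                - hermInner (A' *ᵥ (C *ᵥ a)) a * e2
            exact (mul_eq_zero.mp h3).resolve_right haD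
          have hβz : (c 1 + (t₀:ℂ) * d 1 - (t₀:ℂ) * (c 0 + (t₀:ℂ) * d 0)) = 0 := by
            have h3 : (c 1 + (t₀:ℂ) * d 1 - (t₀:ℂ) * (c 0 + (t₀:ℂ) * d 0))
                * (hermInner (A' *ᵥ a) a * hermInner (A' *ᵥ (C *ᵥ a)) (C *ᵥ a)
                - hermInner (A' *ᵥ (C *ᵥ a)) a * hermInner (A' *ᵥ (C *ᵥ a)) a) = 0 := by
              linear_combination hermInner (A' *ᵥ a) a * e2
                - hermInner (A' *ᵥ (C *ᵥ a)) a * e1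
            exact (mul_eq_zero.mp h3).resolve_right haD
          rw [hx0, hβz, hαz, zero_smul, zero_smul, add_zero]
        · rintro rfl
          exact zero_mem_goal A a
end
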